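/- Let α be a type of semantic-role (SR) tags and σ a type of SSUs equipped with a map sr : σ → α assigning to each SSU its SR tag, and let c : σ → σ → σ be any merging operation satisfying sr (c a b) = sr a for all a b : σ. Define merge : List σ → List σ recursively by merge [] = [], merge [a] = [a], and merge (a :: b :: t) = if sr a = sr b then merge (c a b :: t) else a :: merge (b :: t). Then for every list l : List σ, the merged list merge l contains no two consecutive elements with the same SR tag; i.e., (merge l).Chain' (fun u v => sr u ≠ sr v). -/

import Mathlib

/-- Merging of consecutive SSUs with the same SR tag. -/
def mergeSSU {α σ : Type*} [DecidableEq α] (sr : σ → α) (c : σ → σ → σ) :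
    List σ → List σ
  | [] => []
  | [a] => [a]
  | a :: b :: t =>
    if sr a = sr b then mergeSSU sr c (c a b :: t)
    else a :: mergeSSU sr c (b :: t)
  termination_by l => l.length

lemma mergeSSU_head {α σ : Type*} [DecidableEq α]
    (sr : σ → α) (c : σ → σ → σ) (hc : ∀ a b : σ, sr (c a b) = sr a) :
    ∀ t : List σ, ∀ a : σ, ∃ a' r, mergeSSU sr c (a :: t) = a' :: r ∧ sr a' = sr a := by
  intro t
  induction t with
  | nil => intro a; exact ⟨a, [], by rw [mergeSSU], rfl⟩
  | cons b t ih =>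
    intro a
    rw [mergeSSU]
    split
    · obtain ⟨a', r, h1, h2⟩ := ih (c a b)
      exact ⟨a', r, h1, by rw [h2, hc]⟩
    · exact ⟨a, _, rfl, rfl⟩

/-- Proposition 1: after merging, no two consecutive SSUs have the same SR tag. -/
theorem mergeSSU_chain'_ne {α σ : Type*} [DecidableEq α]
    (sr : σ → α) (c : σ → σ → σ) (hc : ∀ a b : σ, sr (c a b) = sr a)
    (l : List σ) :
    (mergeSSU sr c l).Chain' (fun u v => sr u ≠ sr v) := by
  induction l using mergeSSU.induct (sr := sr) (c := c) with
  | case1 => simp [mergeSSU, List.Chain']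
  | case2 a => simp [mergeSSU, List.Chain']
  | case3 a b t h ih => rw [mergeSSU, if_pos h]; exact ih
  | case4 a b t h ih =>
    rw [mergeSSU, if_neg h]
    obtain ⟨b', r, h1, h2⟩ := mergeSSU_head sr c hc t b
    rw [h1] at ih ⊢
    exact List.isChain_cons_cons.mpr ⟨by rw [h2]; exact h, ih⟩
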